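/- If G₁ and G₂ share exactly one vertex z, S₁ is a total [1,2]-set of G₁, S₂ is a total [1,2]-set of G₂, z ∈ S₁ ∩ S₂, and z has exactly one neighbor in S₁ within G₁ and exactly one neighbor in S₂ within G₂, then S₁ ∪ S₂ is a total [1,2]-set of G₁ ∪ G₂. -/

import Mathlib

open scoped Classical

/-- Number of neighbors of `v` that lie in `S`, i.e. `|N(v) ∩ S|`. -/
noncomputable def nbrCount {V : Type*} [Fintype V] (G : SimpleGraph V) (S : Finset V) (v : V) : ℕ :=
  (Finset.univ.filter (fun u => G.Adj v u ∧ u ∈ S)).card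

/-- `S` is a dominating set of `G`. -/
def IsDominatingSet {V : Type*} [Fintype V] (G : SimpleGraph V) (S : Finset V) : Prop :=
  ∀ v, v ∉ S → 1 ≤ nbrCount G S v

/-- `S` is a total dominating set of `G`. -/
def IsTotalDominatingSet {V : Type*} [Fintype V] (G : SimpleGraph V) (S : Finset V) : Prop :=
  ∀ v, 1 ≤ nbrCount G S v

/-- `S` is a `[1,2]`-set of `G`. -/
def IsOneTwoSet {V : Type*} [Fintype V] (G : SimpleGraph V) (S : Finset V) : Prop :=
  ∀ v, v ∉ S → 1 ≤ nbrCount G S v ∧ nbrCount G S v ≤ 2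

/-- `S` is a total `[1,2]`-set of `G`. -/
def IsTotalOneTwoSet {V : Type*} [Fintype V] (G : SimpleGraph V) (S : Finset V) : Prop :=
  ∀ v, 1 ≤ nbrCount G S v ∧ nbrCount G S v ≤ 2

/-- The domination number `γ(G)`. -/
noncomputable def gamma {V : Type*} [Fintype V] (G : SimpleGraph V) : ℕ :=
  sInf {n | ∃ S : Finset V, IsDominatingSet G S ∧ S.card = n}

/-- The `[1,2]`-domination number `γ_{[1,2]}(G)`. -/
noncomputable def gamma12 {V : Type*} [Fintype V] (G : SimpleGraph V) : ℕ :=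
  sInf {n | ∃ S : Finset V, IsOneTwoSet G S ∧ S.card = n}

/-- The total `[1,2]`-domination number `γ_{t[1,2]}(G)`. -/
noncomputable def gammaT12 {V : Type*} [Fintype V] (G : SimpleGraph V) : ℕ :=
  sInf {n | ∃ S : Finset V, IsTotalOneTwoSet G S ∧ S.card = n}

/-- `S` satisfies the total `[1,2]`-condition on the vertex set `W` in `G`. -/
def IsTotalOneTwoOn {V : Type*} [Fintype V] (G : SimpleGraph V) (W S : Finset V) : Prop :=
  ∀ v ∈ W, 1 ≤ nbrCount G S v ∧ nbrCount G S v ≤ 2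

theorem totalOneTwo_union_one_shared_vertex {V : Type*} [Fintype V]
    (G₁ G₂ : SimpleGraph V) (A B S₁ S₂ : Finset V) (z : V)
    (hA : ∀ u v, G₁.Adj u v → u ∈ A ∧ v ∈ A)
    (hB : ∀ u v, G₂.Adj u v → u ∈ B ∧ v ∈ B)
    (hAB : A ∩ B = {z})
    (hE : ∀ u v, ¬ (G₁.Adj u v ∧ G₂.Adj u v))
    (hS₁ : S₁ ⊆ A) (hS₂ : S₂ ⊆ B)
    (h₁ : IsTotalOneTwoOn G₁ A S₁) (h₂ : IsTotalOneTwoOn G₂ B S₂)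
    (hz₁ : z ∈ S₁) (hz₂ : z ∈ S₂)
    (hd₁ : nbrCount G₁ S₁ z = 1) (hd₂ : nbrCount G₂ S₂ z = 1) :
    IsTotalOneTwoOn (G₁ ⊔ G₂) (A ∪ B) (S₁ ∪ S₂) := by
  have memAB : ∀ u, u ∈ A → u ∈ B → u = z := fun u ha hb =>
    Finset.mem_singleton.mp (hAB ▸ Finset.mem_inter.mpr ⟨ha, hb⟩)
  intro v hv
  by_cases hvA : v ∈ A
  · by_cases hvB : v ∈ B
    · have hvz : v = z := memAB v hvA hvB
      subst hvz
      have key : nbrCount (G₁ ⊔ G₂) (S₁ ∪ S₂) v = nbrCount G₁ S₁ v + nbrCount G₂ S₂ v := by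
        unfold nbrCount
        rw [← Finset.card_union_of_disjoint]
        · congr 1
          ext u
          simp only [Finset.mem_filter, Finset.mem_union, Finset.mem_univ, true_and,
            SimpleGraph.sup_adj]
          constructor
          · rintro ⟨h1 | h2, hs | hs⟩
            · exact Or.inl ⟨h1, hs⟩
            · have := memAB u ((hA v u h1).2) (hS₂ hs)
              exact absurd (this ▸ h1) (G₁.loopless.irrefl v)
            · have := memAB u (hS₁ hs) ((hB v u h2).2)
              exact absurd (this ▸ h2) (G₂.loopless.irrefl v)
            · exact Or.inr ⟨h2, hs⟩
          · rintro (⟨h, hs⟩ | ⟨h, hs⟩)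
            · exact ⟨Or.inl h, Or.inl hs⟩
            · exact ⟨Or.inr h, Or.inr hs⟩
        · rw [Finset.disjoint_left]
          intro u hu1 hu2
          simp only [Finset.mem_filter] at hu1 hu2
          exact hE v u ⟨hu1.2.1, hu2.2.1⟩
      rw [key, hd₁, hd₂]
      omega
    · have heq : nbrCount (G₁ ⊔ G₂) (S₁ ∪ S₂) v = nbrCount G₁ S₁ v := by
        unfold nbrCount
        congr 1
        ext u
        simp only [Finset.mem_filter, Finset.mem_univ, true_and, SimpleGraph.sup_adj,
          Finset.mem_union]
        constructor
        · rintro ⟨h1 | h2, hs⟩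
          · refine ⟨h1, ?_⟩
            rcases hs with hs | hs
            · exact hs
            · have := memAB u ((hA v u h1).2) (hS₂ hs)
              exact this ▸ hz₁
          · exact absurd ((hB v u h2).1) hvB
        · rintro ⟨h1, hs⟩; exact ⟨Or.inl h1, Or.inl hs⟩
      rw [heq]; exact h₁ v hvA
  · have hvB : v ∈ B := by
      rcases Finset.mem_union.mp hv with h | h
      · exact absurd h hvA
      · exact h
    have heq : nbrCount (G₁ ⊔ G₂) (S₁ ∪ S₂) v = nbrCount G₂ S₂ v := by
      unfold nbrCount
      congr 1
      ext u
      simp only [Finset.mem_filter, Finset.mem_univ, true_and, SimpleGraph.sup_adj,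
        Finset.mem_union]
      constructor
      · rintro ⟨h1 | h2, hs⟩
        · exact absurd ((hA v u h1).1) hvA
        · refine ⟨h2, ?_⟩
          rcases hs with hs | hs
          · have := memAB u (hS₁ hs) ((hB v u h2).2)
            exact this ▸ hz₂
          · exact hs
      · rintro ⟨h2, hs⟩; exact ⟨Or.inr h2, Or.inr hs⟩
    rw [heq]; exact h₂ v hvB
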